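/- Suppose the linear program (LP-LB) — maximize Σ_{w∈W} Σ_{f∈F} α(w,f) x_{w,f} over x ∈ ℝ^{W×F} subject to x ≥ 0, Σ_{f∈F} x_{w,f} ≤ 1 for every worker w, and λ_D ≤ Σ_{w∈D} x_{w,f} ≤ λ̄_D for every firm f and D ∈ ℋ_f — has an optimal solution X* with X*_{w,f} ∈ {0,1} for all (w,f). Then there exist salaries s : W × F → ℝ such that the arrangement (X*, s) is r-feasible and individually rational for all workers, and its payoffs u, v satisfy Σ_{w∈D} α(w,f) ≤ Σ_{w∈D} u_w + v_f for every firm f and every feasible set D ∈ 𝒯_f; in particular (X*, s) is an r-stable arrangement. -/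

import Mathlib

open Finset

namespace TwoSidedMatching

variable {W F : Type*} [Fintype W] [DecidableEq W] [Fintype F] [DecidableEq F]

/-- The set of workers assigned to firm `f` under assignment `X`. -/
def assigned (X : W → Option F) (f : F) : Finset W :=
  Finset.univ.filter fun w => X w = some f

/-- Payoff of worker `w`: `a w f + s w f` if matched to `f`, and `0` if unmatched. -/
def workerPayoff (a s : W → F → ℝ) (X : W → Option F) (w : W) : ℝ :=
  match X w with
  | some f => a w f + s w f
  | none => 0

/-- Payoff of firm `f`: value of its assigned set minus total salaries paid. -/
def firmPayoff (b : Finset W → F → ℝ) (s : W → F → ℝ) (X : W → Option F) (f : F) : ℝ :=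
  b (assigned X f) f - ∑ w ∈ assigned X f, s w f

/-- An assignment is feasible if each firm's assigned set is feasible or empty. -/
def Feasible (𝒯 : F → Set (Finset W)) (X : W → Option F) : Prop :=
  ∀ f : F, assigned X f ∈ 𝒯 f ∨ assigned X f = ∅

/-- r-feasibility: each firm's assigned set is feasible. -/
def RFeasible (𝒯 : F → Set (Finset W)) (X : W → Option F) : Prop :=
  ∀ f : F, assigned X f ∈ 𝒯 f

/-- A blocking coalition: a firm `f`, a feasible set `D ∈ 𝒯 f`, and salaries `r`
making all members of `D ∪ {f}` weakly better off and at least one strictly better off. -/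
def Blocks (a : W → F → ℝ) (b : Finset W → F → ℝ) (𝒯 : F → Set (Finset W))
    (s : W → F → ℝ) (X : W → Option F) : Prop :=
  ∃ f : F, ∃ D ∈ 𝒯 f, ∃ r : W → ℝ,
    (∀ w ∈ D, a w f + r w ≥ workerPayoff a s X w) ∧
    (b D f - ∑ w ∈ D, r w ≥ firmPayoff b s X f) ∧
    ((∃ w ∈ D, a w f + r w > workerPayoff a s X w) ∨
      b D f - ∑ w ∈ D, r w > firmPayoff b s X f)

/-- Stability: feasible, individually rational for workers and firms, and no blocking coalition. -/
def Stable (a : W → F → ℝ) (b : Finset W → F → ℝ) (𝒯 : F → Set (Finset W))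
    (s : W → F → ℝ) (X : W → Option F) : Prop :=
  Feasible 𝒯 X ∧ (∀ w, 0 ≤ workerPayoff a s X w) ∧
    (∀ f, 0 ≤ firmPayoff b s X f) ∧ ¬ Blocks a b 𝒯 s X

/-- r-stability: r-feasible, individually rational for workers, and no blocking coalition. -/
def RStable (a : W → F → ℝ) (b : Finset W → F → ℝ) (𝒯 : F → Set (Finset W))
    (s : W → F → ℝ) (X : W → Option F) : Prop :=
  RFeasible 𝒯 X ∧ (∀ w, 0 ≤ workerPayoff a s X w) ∧ ¬ Blocks a b 𝒯 s X

/-- Total match value of an assignment. -/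
def totalValue (a : W → F → ℝ) (b : Finset W → F → ℝ) (X : W → Option F) : ℝ :=
  (∑ w : W, match X w with
    | some f => a w f
    | none => 0) +
  ∑ f : F, b (assigned X f) f

/-- Two sets are intersecting if their intersection and both differences are nonempty. -/
def IntersectingSets (A B : Finset W) : Prop :=
  (A ∩ B).Nonempty ∧ (A \ B).Nonempty ∧ (B \ A).Nonempty

/-- An intersecting family: does not contain `∅` and is closed under
intersections and unions of intersecting members. -/
def IntersectingFamily (ℋ : Set (Finset W)) : Prop :=
  ∅ ∉ ℋ ∧ ∀ A ∈ ℋ, ∀ B ∈ ℋ, IntersectingSets A B → A ∩ B ∈ ℋ ∧ A ∪ B ∈ ℋ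

/-- Submodularity on intersecting pairs of a family. -/
def SubmodularOnIntersecting (ℋ : Set (Finset W)) (g : Finset W → ℤ) : Prop :=
  ∀ A ∈ ℋ, ∀ B ∈ ℋ, IntersectingSets A B → g (A ∪ B) + g (A ∩ B) ≤ g A + g B

/-- Supermodularity on intersecting pairs of a family. -/
def SupermodularOnIntersecting (ℋ : Set (Finset W)) (g : Finset W → ℤ) : Prop :=
  ∀ A ∈ ℋ, ∀ B ∈ ℋ, IntersectingSets A B → g A + g B ≤ g (A ∪ B) + g (A ∩ B)

/-- A hierarchy: `∅` is not a member and any two members are nested or disjoint. -/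
def Hierarchy (ℋ : Set (Finset W)) : Prop :=
  ∅ ∉ ℋ ∧ ∀ A ∈ ℋ, ∀ B ∈ ℋ, A ⊆ B ∨ B ⊆ A ∨ A ∩ B = ∅

/-- Feasible sets under upper-bound quotas: `|D ∩ D'| ≤ lam D'` for every `D' ∈ ℋ`. -/
def upperSets (ℋ : Set (Finset W)) (lam : Finset W → ℤ) : Set (Finset W) :=
  {D | ∀ D' ∈ ℋ, ((D ∩ D').card : ℤ) ≤ lam D'}

/-- Feasible sets under lower and upper quotas: `lo D' ≤ |D ∩ D'| ≤ hi D'` for `D' ∈ ℋ`. -/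
def quotaSets (ℋ : Set (Finset W)) (lo hi : Finset W → ℤ) : Set (Finset W) :=
  {D | ∀ D' ∈ ℋ, lo D' ≤ ((D ∩ D').card : ℤ) ∧ ((D ∩ D').card : ℤ) ≤ hi D'}

/-- Feasibility for the matching LP with upper-bound constraints. -/
def LPFeasible (ℋ : F → Set (Finset W)) (lam : F → Finset W → ℤ) (x : W → F → ℝ) : Prop :=
  (∀ w f, 0 ≤ x w f) ∧ (∀ w, ∑ f : F, x w f ≤ 1) ∧
    ∀ f : F, ∀ D ∈ ℋ f, ∑ w ∈ D, x w f ≤ (lam f D : ℝ)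

/-- Feasibility for the matching LP with lower and upper bound constraints. -/
def LPLBFeasible (ℋ : F → Set (Finset W)) (lo hi : F → Finset W → ℤ) (x : W → F → ℝ) : Prop :=
  (∀ w f, 0 ≤ x w f) ∧ (∀ w, ∑ f : F, x w f ≤ 1) ∧
    ∀ f : F, ∀ D ∈ ℋ f, (lo f D : ℝ) ≤ ∑ w ∈ D, x w f ∧ ∑ w ∈ D, x w f ≤ (hi f D : ℝ)

/-- The LP objective: total match value of a fractional assignment. -/
def LPobj (α : W → F → ℝ) (x : W → F → ℝ) : ℝ :=
  ∑ w : W, ∑ f : F, α w f * x w f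


section Infra
open Finset
open scoped RealInnerProductSpace

variable {n : Type*} [Fintype n]

def coneOf {ι : Type*} [Fintype ι] (v : ι → EuclideanSpace ℝ n) : Set (EuclideanSpace ℝ n) :=
  {x | ∃ t : ι → ℝ, (∀ i, 0 ≤ t i) ∧ ∑ i, t i • v i = x}

theorem carath {ι : Type*} [Fintype ι] [DecidableEq ι] (v : ι → EuclideanSpace ℝ n) :
    ∀ (N : ℕ) (s : Finset ι) (_ : s.card ≤ N) (t : ι → ℝ), (∀ i, 0 ≤ t i) →
      (∀ i ∉ s, t i = 0) →
      ∃ (r : Finset ι) (t' : ι → ℝ), r ⊆ s ∧ (∀ i, 0 ≤ t' i) ∧ (∀ i ∉ r, t' i = 0) ∧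
        ∑ i, t' i • v i = ∑ i, t i • v i ∧ LinearIndependent ℝ (fun i : r => v i) := by
  intro N
  induction N with
  | zero =>
    intro s hs t ht hsupp
    have hse : s = ∅ := Finset.card_eq_zero.mp (Nat.le_zero.mp hs)
    subst hse
    exact ⟨∅, t, Finset.Subset.refl _, ht, fun i _ => hsupp i (by simp), rfl,
      linearIndependent_empty_type⟩
  | succ N ih =>
    intro s hs t ht hsupp
    by_cases hli : LinearIndependent ℝ (fun i : s => v i)
    · exact ⟨s, t, Finset.Subset.refl _, ht, hsupp, rfl, hli⟩
    · obtain ⟨g, hg0, i₁, hi₁⟩ := Fintype.not_linearIndependent_iff.mp hli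
      set G₀ : ι → ℝ := fun i => if h : i ∈ s then g ⟨i, h⟩ else 0 with hG
      have hGsum : ∑ i, G₀ i • v i = 0 := by
        rw [← Finset.sum_subset (Finset.subset_univ s)]
        · rw [← hg0, ← Finset.sum_attach s (fun i => G₀ i • v i)]
          refine Finset.sum_congr rfl fun i _ => ?_
          simp [hG, i.2]
        · intro i _ hi
          simp [hG, hi]
      have hGoff : ∀ i ∉ s, G₀ i = 0 := fun i hi => by simp [hG, hi]
      have key : ∀ (G : ι → ℝ), (∑ i, G i • v i = 0) → (∀ i ∉ s, G i = 0) →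
          (∃ i ∈ s, 0 < G i) →
          ∃ (r : Finset ι) (t' : ι → ℝ), r ⊆ s ∧ (∀ i, 0 ≤ t' i) ∧ (∀ i ∉ r, t' i = 0) ∧
            ∑ i, t' i • v i = ∑ i, t i • v i ∧ LinearIndependent ℝ (fun i : r => v i) := by
        intro G hGs hGoff hpos
        set P : Finset ι := s.filter (fun i => 0 < G i) with hP
        have hPne : P.Nonempty := by
          obtain ⟨i, his, hGi⟩ := hpos
          exact ⟨i, Finset.mem_filter.mpr ⟨his, hGi⟩⟩
        obtain ⟨i₀, hi₀P, hi₀min⟩ := P.exists_min_image (fun i => t i / G i) hPne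
        have hi₀s : i₀ ∈ s := (Finset.mem_filter.mp hi₀P).1
        have hGi₀ : 0 < G i₀ := (Finset.mem_filter.mp hi₀P).2
        set τ : ℝ := t i₀ / G i₀ with hτ
        have hτ0 : 0 ≤ τ := div_nonneg (ht i₀) hGi₀.le
        set t' : ι → ℝ := fun i => t i - τ * G i with ht'
        have ht'0 : ∀ i, 0 ≤ t' i := by
          intro i
          rw [ht']
          dsimp only
          rw [sub_nonneg]
          rcases le_or_gt (G i) 0 with h | h
          · exact le_trans (mul_nonpos_of_nonneg_of_nonpos hτ0 h) (ht i)
          · rcases (em (i ∈ s)) with his | his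
            · have := hi₀min i (Finset.mem_filter.mpr ⟨his, h⟩)
              rw [div_le_div_iff₀ hGi₀ h] at this
              rw [hτ, div_mul_eq_mul_div, div_le_iff₀ hGi₀]
              linarith
            · rw [hGoff i his] at h; exact absurd h (lt_irrefl 0)
        have ht'i₀ : t' i₀ = 0 := by
          rw [ht']
          dsimp only
          rw [hτ, div_mul_cancel₀ _ (ne_of_gt hGi₀)]
          ring
        have ht'off : ∀ i ∉ s.erase i₀, t' i = 0 := by
          intro i hi
          rcases em (i = i₀) with h | h
          · rw [h]; exact ht'i₀
          · have his : i ∉ s := fun hmem => hi (Finset.mem_erase.mpr ⟨h, hmem⟩)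
            rw [ht']
            dsimp only
            rw [hsupp i his, hGoff i his]
            ring
        have ht'sum : ∑ i, t' i • v i = ∑ i, t i • v i := by
          rw [ht']
          dsimp only
          have : ∀ i : ι, (t i - τ * G i) • v i = t i • v i - τ • (G i • v i) := by
            intro i; rw [sub_smul, smul_smul]
          simp_rw [this, Finset.sum_sub_distrib, ← Finset.smul_sum, hGs, smul_zero, sub_zero]
        have hcard : (s.erase i₀).card ≤ N := by
          have := Finset.card_erase_of_mem hi₀s
          omega
        obtain ⟨r, t'', hr, h0, hoff, hsum, hli'⟩ := ih (s.erase i₀) hcard t' ht'0 ht'off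
        exact ⟨r, t'', hr.trans (Finset.erase_subset _ _), h0, hoff, hsum.trans ht'sum, hli'⟩
      rcases em (∃ i ∈ s, 0 < G₀ i) with hpos | hneg
      · exact key G₀ hGsum hGoff hpos
      · have hi₁s : (i₁ : ι) ∈ s := i₁.2
        have hG₀i₁ : G₀ i₁ ≠ 0 := by simpa [hG, i₁.2] using hi₁
        push_neg at hneg
        have : 0 < -G₀ i₁ := by
          rcases lt_trichotomy (G₀ i₁) 0 with h | h | h
          · linarith
          · exact absurd h hG₀i₁
          · exact absurd h (not_lt.mpr (hneg i₁ hi₁s))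
        refine key (fun i => -G₀ i) ?_ (fun i hi => by simp [hGoff i hi]) ⟨i₁, hi₁s, this⟩
        simp_rw [neg_smul, Finset.sum_neg_distrib, hGsum, neg_zero]

theorem isClosed_support_cone {ι : Type*} [Fintype ι] [DecidableEq ι]
    (v : ι → EuclideanSpace ℝ n) (r : Finset ι)
    (h : LinearIndependent ℝ (fun i : r => v i)) :
    IsClosed {x : EuclideanSpace ℝ n |
      ∃ t : ι → ℝ, (∀ i, 0 ≤ t i) ∧ (∀ i ∉ r, t i = 0) ∧ ∑ i, t i • v i = x} := by
  classical
  set L : (↥r → ℝ) →ₗ[ℝ] EuclideanSpace ℝ n :=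
    { toFun := fun u => ∑ i : r, u i • v i
      map_add' := by
        intro u u'
        simp [add_smul, Finset.sum_add_distrib]
      map_smul' := by
        intro c u
        simp [smul_smul, Finset.smul_sum] } with hL
  have hker : LinearMap.ker L = ⊥ := by
    rw [LinearMap.ker_eq_bot']
    intro u hu
    have := Fintype.linearIndependent_iff.mp h u hu
    funext i
    exact this i
  have hclosed : IsClosed {u : ↥r → ℝ | ∀ i, 0 ≤ u i} := by
    have : {u : ↥r → ℝ | ∀ i, 0 ≤ u i} = ⋂ i, {u | 0 ≤ u i} := by
      ext u; simp [Set.mem_iInter]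
    rw [this]
    exact isClosed_iInter fun i => isClosed_le continuous_const (continuous_apply i)
  have himg : {x : EuclideanSpace ℝ n |
      ∃ t : ι → ℝ, (∀ i, 0 ≤ t i) ∧ (∀ i ∉ r, t i = 0) ∧ ∑ i, t i • v i = x} =
      L '' {u | ∀ i, 0 ≤ u i} := by
    ext x
    constructor
    · rintro ⟨t, ht0, htoff, hsum⟩
      refine ⟨fun i => t i, fun i => ht0 i, ?_⟩
      rw [hL]
      show ∑ i : r, t i • v i = x
      rw [← hsum, Finset.sum_coe_sort r (fun i => t i • v i)]
      exact Finset.sum_subset (Finset.subset_univ r)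
        (fun i _ hi => by rw [htoff i hi, zero_smul])
    · rintro ⟨u, hu, hx⟩
      refine ⟨fun i => if hh : i ∈ r then u ⟨i, hh⟩ else 0, ?_, ?_, ?_⟩
      · intro i
        by_cases hh : i ∈ r
        · simp only [dif_pos hh]; exact hu _
        · simp only [dif_neg hh]; exact le_refl 0
      · intro i hi; simp [hi]
      · rw [← hx, hL]
        show _ = ∑ i : r, u i • v i
        rw [← Finset.sum_subset (Finset.subset_univ r)
            (fun i _ hi => by simp [hi]),
          ← Finset.sum_coe_sort r
            (fun i => (if hh : i ∈ r then u ⟨i, hh⟩ else 0) • v i)]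
        refine Finset.sum_congr rfl fun i _ => ?_
        simp [i.2]
  rw [himg]
  exact (LinearMap.isClosedEmbedding_of_injective hker).isClosedMap _ hclosed

theorem isClosed_coneOf {ι : Type*} [Fintype ι] (v : ι → EuclideanSpace ℝ n) :
    IsClosed (coneOf v) := by
  classical
  have hcover : coneOf v = ⋃ r ∈ {r : Finset ι | LinearIndependent ℝ (fun i : r => v i)},
      {x : EuclideanSpace ℝ n |
        ∃ t : ι → ℝ, (∀ i, 0 ≤ t i) ∧ (∀ i ∉ r, t i = 0) ∧ ∑ i, t i • v i = x} := by
    ext x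
    constructor
    · rintro ⟨t, ht0, hsum⟩
      obtain ⟨r, t', _, ht'0, ht'off, ht'sum, hli⟩ :=
        carath v (Finset.univ : Finset ι).card Finset.univ (le_refl _) t ht0 (by simp)
      exact Set.mem_biUnion hli ⟨t', ht'0, ht'off, ht'sum.trans hsum⟩
    · rintro ⟨S, ⟨r, rfl⟩, hS⟩
      simp only [Set.mem_iUnion] at hS
      obtain ⟨_, t, ht0, _, hsum⟩ := hS
      exact ⟨t, ht0, hsum⟩
  rw [hcover]
  exact Set.Finite.isClosed_biUnion (Set.toFinite _)
    (fun r hr => isClosed_support_cone v r hr)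

/-- Farkas alternative for finitely many vectors, in coordinates. -/
theorem farkas_alt {ι κ : Type*} [Fintype ι] [Fintype κ] (v : κ → ι → ℝ) (b : ι → ℝ) :
    (∃ t : κ → ℝ, (∀ k, 0 ≤ t k) ∧ ∀ i, ∑ k, t k * v k i = b i) ∨
    (∃ y : ι → ℝ, (∀ k, ∑ i, v k i * y i ≤ 0) ∧ 0 < ∑ i, b i * y i) := by
  classical
  set e := (WithLp.equiv 2 (ι → ℝ)).symm with he
  set vE : κ → EuclideanSpace ℝ ι := fun k => e (v k) with hvE
  set bE : EuclideanSpace ℝ ι := e b with hbE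
  by_cases hb : bE ∈ coneOf vE
  · left
    obtain ⟨t, ht0, hsum⟩ := hb
    refine ⟨t, ht0, fun i => ?_⟩
    have h2 := congrArg (⇑(WithLp.linearEquiv 2 ℝ (ι → ℝ))) hsum
    rw [map_sum] at h2
    have h2' : ∑ k, t k • v k = b := by
      simpa [hvE, hbE, he, WithLp.linearEquiv_apply] using h2
    have h3 := congrArg (fun z : ι → ℝ => z i) h2'
    simpa using h3
  · right
    -- the cone is a closed convex cone; separate
    set K : ConvexCone ℝ (EuclideanSpace ℝ ι) :=
      { carrier := coneOf vE
        smul_mem' := by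
          rintro c hc x ⟨t, ht0, hsum⟩
          exact ⟨fun k => c * t k, fun k => mul_nonneg hc.le (ht0 k),
            by simp_rw [mul_smul, ← Finset.smul_sum, hsum]⟩
        add_mem' := by
          rintro x ⟨t, ht0, hsum⟩ y ⟨t', ht'0, hsum'⟩
          exact ⟨fun k => t k + t' k, fun k => add_nonneg (ht0 k) (ht'0 k),
            by simp_rw [add_smul, Finset.sum_add_distrib, hsum, hsum']⟩ } with hK
    have hne : (K : Set (EuclideanSpace ℝ ι)).Nonempty :=
      ⟨0, ⟨fun _ => 0, fun _ => le_refl 0, by simp⟩⟩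
    obtain ⟨y, hy1, hy2⟩ : ∃ y, (∀ x ∈ K, 0 ≤ inner ℝ x y) ∧ inner ℝ bE y < 0 := by
      let C : ProperCone ℝ (EuclideanSpace ℝ ι) :=
        { carrier := coneOf vE
          add_mem' := fun ha hb => K.add_mem ha hb
          zero_mem' := ⟨fun _ => 0, fun _ => le_refl 0, by simp⟩
          smul_mem' := by
            rintro c x ⟨t, ht0, hsum⟩
            exact ⟨fun k => (c : ℝ) * t k, fun k => mul_nonneg c.2 (ht0 k),
              by rw [← hsum, Finset.smul_sum]; exact Finset.sum_congr rfl fun k _ => by rw [mul_smul]; rfl⟩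
          isClosed' := isClosed_coneOf vE }
      exact C.hyperplane_separation' (x₀ := bE) hb
    refine ⟨fun i => -(y i), fun k => ?_, ?_⟩
    · have hvk : vE k ∈ K := by
        refine ⟨fun k' => if k' = k then 1 else 0, fun k' => by positivity, ?_⟩
        rw [Finset.sum_eq_single k] <;> simp +contextual
      have := hy1 _ hvk
      rw [PiLp.inner_apply] at this
      simp only [RCLike.inner_apply, conj_trivial] at this
      have heq : ∀ i, vE k i = v k i := fun i => rfl
      simp_rw [mul_neg, Finset.sum_neg_distrib]
      rw [neg_nonpos]
      simpa [heq, mul_comm] using this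
    · rw [PiLp.inner_apply] at hy2
      simp only [RCLike.inner_apply, conj_trivial] at hy2
      have heq : ∀ i, bE i = b i := fun i => rfl
      simp_rw [mul_neg, Finset.sum_neg_distrib]
      rw [← neg_pos] at hy2
      calc (0:ℝ) < -∑ i, y i * bE i := hy2
        _ = -∑ i, b i * y i := by simp_rw [heq]; congr 1; exact Finset.sum_congr rfl fun i _ => mul_comm _ _

theorem lp_duality_at_opt {ι κ : Type*} [Fintype ι] [Fintype κ]
    (A : κ → ι → ℝ) (d : κ → ℝ) (α : ι → ℝ) (x : ι → ℝ)
    (hx : ∀ k, ∑ i, A k i * x i ≤ d k)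
    (hopt : ∀ z : ι → ℝ, (∀ k, ∑ i, A k i * z i ≤ d k) →
      ∑ i, α i * z i ≤ ∑ i, α i * x i) :
    ∃ y : κ → ℝ, (∀ k, 0 ≤ y k) ∧ (∀ k, y k ≠ 0 → ∑ i, A k i * x i = d k) ∧
      (∀ i, α i = ∑ k, y k * A k i) := by
  classical
  set T : κ → Prop := fun k => ∑ i, A k i * x i = d k with hT
  rcases farkas_alt (fun k : {k // T k} => A k) α with ⟨t, ht0, heq⟩ | ⟨y, hy1, hy2⟩
  · refine ⟨fun k => if h : T k then t ⟨k, h⟩ else 0, ?_, ?_, ?_⟩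
    · intro k; by_cases h : T k
      · simp only [dif_pos h]; exact ht0 _
      · simp only [dif_neg h]; exact le_refl 0
    · intro k hk
      by_cases h : T k
      · exact h
      · simp [dif_neg h] at hk
    · intro i
      rw [← heq i]
      have hv : ∀ k ∈ Finset.univ, k ∉ Finset.univ.filter T →
          (if h : T k then t ⟨k, h⟩ else 0) * A k i = 0 := by
        intro k _ hk
        simp only [Finset.mem_filter, Finset.mem_univ, true_and] at hk
        simp [dif_neg hk]
      rw [← Finset.sum_subset (Finset.filter_subset T Finset.univ) hv]
      rw [Finset.sum_subtype (p := T) (Finset.univ.filter T) (by simp)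
        (fun k => (if h : T k then t ⟨k, h⟩ else 0) * A k i)]
      refine Finset.sum_congr rfl fun k _ => ?_
      rw [dif_pos k.2]
  · exfalso
    set S : Finset κ := Finset.univ.filter (fun k => ¬ T k) with hS
    set g : κ → ℝ := fun k =>
      (d k - ∑ i, A k i * x i) / max 1 (∑ i, A k i * y i) with hg
    set ε : ℝ := (insert (1:ℝ) (S.image g)).min' (Finset.insert_nonempty _ _) with hε
    have hslack : ∀ k ∈ S, 0 < d k - ∑ i, A k i * x i := by
      intro k hk
      simp only [hS, Finset.mem_filter, Finset.mem_univ, true_and] at hk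
      have := lt_of_le_of_ne (hx k) hk
      linarith
    have hεpos : 0 < ε := by
      rw [hε, Finset.lt_min'_iff]
      intro b hb
      rcases Finset.mem_insert.mp hb with rfl | hb
      · norm_num
      · obtain ⟨k, hk, rfl⟩ := Finset.mem_image.mp hb
        exact div_pos (hslack k hk) (lt_of_lt_of_le one_pos (le_max_left _ _))
    have hεle : ∀ k ∈ S, ε ≤ g k := fun k hk =>
      Finset.min'_le _ _ (Finset.mem_insert_of_mem (Finset.mem_image_of_mem g hk))
    have hz : ∀ k, ∑ i, A k i * (x i + ε * y i) ≤ d k := by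
      intro k
      have hexp : ∑ i, A k i * (x i + ε * y i)
          = (∑ i, A k i * x i) + ε * ∑ i, A k i * y i := by
        rw [Finset.mul_sum, ← Finset.sum_add_distrib]
        exact Finset.sum_congr rfl fun i _ => by ring
      rw [hexp]
      by_cases h : T k
      · have h1 : ∑ i, A k i * y i ≤ 0 := hy1 ⟨k, h⟩
        have : ε * ∑ i, A k i * y i ≤ 0 := mul_nonpos_of_nonneg_of_nonpos hεpos.le h1
        rw [hT] at h
        linarith [h]
      · have hkS : k ∈ S := by simp [hS, h]
        rcases le_or_gt (∑ i, A k i * y i) 0 with h1 | h1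
        · have : ε * ∑ i, A k i * y i ≤ 0 := mul_nonpos_of_nonneg_of_nonpos hεpos.le h1
          linarith [hx k]
        · have hm : (0:ℝ) < max 1 (∑ i, A k i * y i) :=
            lt_of_lt_of_le one_pos (le_max_left _ _)
          have step1 : ε * ∑ i, A k i * y i ≤ ε * max 1 (∑ i, A k i * y i) :=
            mul_le_mul_of_nonneg_left (le_max_right _ _) hεpos.le
          have step2 : ε * max 1 (∑ i, A k i * y i)
              ≤ g k * max 1 (∑ i, A k i * y i) :=
            mul_le_mul_of_nonneg_right (hεle k hkS) hm.le
          have step3 : g k * max 1 (∑ i, A k i * y i) = d k - ∑ i, A k i * x i := by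
            rw [hg]
            exact div_mul_cancel₀ _ (ne_of_gt hm)
          linarith
    have hobj : ∑ i, α i * x i < ∑ i, α i * (x i + ε * y i) := by
      have hexp : ∑ i, α i * (x i + ε * y i)
          = (∑ i, α i * x i) + ε * ∑ i, α i * y i := by
        rw [Finset.mul_sum, ← Finset.sum_add_distrib]
        exact Finset.sum_congr rfl fun i _ => by ring
      rw [hexp]
      have : 0 < ε * ∑ i, α i * y i := mul_pos hεpos hy2
      linarith
    exact absurd (hopt _ hz) (not_le.mpr hobj)

end Infra

/-- **Duality and r-stable arrangements.** If the matching LP with lower and upper bound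
constraints has an integral optimal solution `x`, then there are salaries `s` such that
the induced arrangement `(X*, s)` is r-feasible, individually rational for all workers,
satisfies `Σ_{w∈D} α w f ≤ Σ_{w∈D} u w + v f` for every firm `f` and feasible `D ∈ 𝒯 f`,
and in particular is r-stable. -/
theorem duality_gives_rstable_arrangement
    {W F : Type*} [Fintype W] [DecidableEq W] [Fintype F] [DecidableEq F]
    (a c : W → F → ℝ) (ℋ : F → Set (Finset W)) (lo hi : F → Finset W → ℤ)
    (hle : ∀ f : F, ∀ D ∈ ℋ f, lo f D ≤ hi f D)
    (x : W → F → ℝ)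
    (hfeas : LPLBFeasible ℋ lo hi x)
    (hopt : ∀ y : W → F → ℝ, LPLBFeasible ℋ lo hi y →
      LPobj (fun w f => a w f + c w f) y ≤ LPobj (fun w f => a w f + c w f) x)
    (h01 : ∀ w f, x w f = 0 ∨ x w f = 1) :
    ∃ (X : W → Option F) (s : W → F → ℝ),
      (∀ w f, X w = some f ↔ x w f = 1) ∧
      RFeasible (fun f => quotaSets (ℋ f) (lo f) (hi f)) X ∧
      (∀ w, 0 ≤ workerPayoff a s X w) ∧
      (∀ f : F, ∀ D ∈ quotaSets (ℋ f) (lo f) (hi f),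
        ∑ w ∈ D, (a w f + c w f) ≤
          (∑ w ∈ D, workerPayoff a s X w) +
            firmPayoff (fun D' f' => ∑ w ∈ D', c w f') s X f) ∧
      RStable a (fun D f => ∑ w ∈ D, c w f)
        (fun f => quotaSets (ℋ f) (lo f) (hi f)) s X := by
  classical
  -- the LP in standard form `A z ≤ d`
  set A : ((W × F) ⊕ (W ⊕ (F × Finset W × Bool))) → (W × F) → ℝ :=
    fun k => match k with
      | Sum.inl p => fun i => if i = p then (-1 : ℝ) else 0
      | Sum.inr (Sum.inl w) => fun i => if i.1 = w then (1 : ℝ) else 0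
      | Sum.inr (Sum.inr q) => fun i =>
          if q.2.1 ∈ ℋ q.1 then
            (if q.2.2 then (1 : ℝ) else -1) * (if i.2 = q.1 ∧ i.1 ∈ q.2.1 then 1 else 0)
          else 0
    with hA
  set d : ((W × F) ⊕ (W ⊕ (F × Finset W × Bool))) → ℝ :=
    fun k => match k with
      | Sum.inl _ => 0
      | Sum.inr (Sum.inl _) => 1
      | Sum.inr (Sum.inr q) =>
          if q.2.1 ∈ ℋ q.1 then (if q.2.2 then (hi q.1 q.2.1 : ℝ) else -(lo q.1 q.2.1 : ℝ))
          else 0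
    with hd
  set av : (W × F) → ℝ := fun i => a i.1 i.2 + c i.1 i.2 with hav
  -- row sums
  have hrow1 : ∀ (p : W × F) (z : (W × F) → ℝ),
      (∑ i, A (Sum.inl p) i * z i) = - z p := by
    intro p z
    have h1 : ∀ i, A (Sum.inl p) i * z i = if i = p then -z i else 0 := by
      intro i
      simp only [hA]
      split_ifs <;> ring
    simp_rw [h1]
    rw [Finset.sum_ite_eq' Finset.univ p (fun i => -z i)]
    simp
  have hrow2 : ∀ (w : W) (z : (W × F) → ℝ),
      (∑ i, A (Sum.inr (Sum.inl w)) i * z i) = ∑ f, z (w, f) := by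
    intro w z
    rw [Fintype.sum_prod_type]
    have h1 : ∀ w', (∑ f, A (Sum.inr (Sum.inl w)) (w', f) * z (w', f))
        = if w' = w then ∑ f, z (w', f) else 0 := by
      intro w'
      by_cases h : w' = w
      · simp [hA, h]
      · simp [hA, h]
    simp_rw [h1]
    rw [Finset.sum_ite_eq' Finset.univ w (fun w' => ∑ f, z (w', f))]
    simp
  have hrow3 : ∀ (f : F) (D : Finset W) (tb : Bool) (z : (W × F) → ℝ), D ∈ ℋ f →
      (∑ i, A (Sum.inr (Sum.inr (f, D, tb))) i * z i)
        = (if tb then (1:ℝ) else -1) * ∑ w ∈ D, z (w, f) := by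
    intro f D tb z hD
    rw [Fintype.sum_prod_type]
    have h1 : ∀ (w : W) (f' : F), A (Sum.inr (Sum.inr (f, D, tb))) (w, f') * z (w, f')
        = if f' = f then (if w ∈ D then (if tb then (1:ℝ) else -1) * z (w, f') else 0)
          else 0 := by
      intro w f'
      simp only [hA, hD, if_true]
      by_cases h1 : f' = f <;> by_cases h2 : w ∈ D <;> simp [h1, h2]
    simp_rw [h1]
    have h2 : ∀ w : W, (∑ f', if f' = f then
        (if w ∈ D then (if tb then (1:ℝ) else -1) * z (w, f') else 0) else 0)
        = if w ∈ D then (if tb then (1:ℝ) else -1) * z (w, f) else 0 := by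
      intro w
      rw [Finset.sum_ite_eq' Finset.univ f
        (fun f' => if w ∈ D then (if tb then (1:ℝ) else -1) * z (w, f') else 0)]
      simp
    simp_rw [h2]
    rw [Finset.sum_ite_mem, Finset.univ_inter, Finset.mul_sum]
  have hrow0 : ∀ (f : F) (D : Finset W) (tb : Bool) (z : (W × F) → ℝ), D ∉ ℋ f →
      (∑ i, A (Sum.inr (Sum.inr (f, D, tb))) i * z i) = 0 := by
    intro f D tb z hD
    rw [Finset.sum_eq_zero]
    intro i _
    simp [hA, hD]
  -- `x` as a vector indexed by `W × F`
  set xv : (W × F) → ℝ := fun i => x i.1 i.2 with hxv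
  obtain ⟨hx0, hx1, hxq⟩ := hfeas
  have hxfeas : ∀ k, ∑ i, A k i * xv i ≤ d k := by
    rintro (p | w | ⟨f, D, tb⟩)
    · rw [hrow1]
      simp only [hd]
      have := hx0 p.1 p.2
      simp only [hxv]
      linarith
    · rw [hrow2]
      simpa [hd, hxv] using hx1 w
    · by_cases hD : D ∈ ℋ f
      · rw [hrow3 f D tb xv hD]
        obtain ⟨hlo, hhi⟩ := hxq f D hD
        cases tb <;> simp [hd, hD, hxv] <;> linarith
      · rw [hrow0 f D tb xv hD]
        simp [hd, hD]
  have hxopt : ∀ z : (W × F) → ℝ, (∀ k, ∑ i, A k i * z i ≤ d k) →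
      ∑ i, av i * z i ≤ ∑ i, av i * xv i := by
    intro z hz
    have hz0 : ∀ w f, 0 ≤ z (w, f) := by
      intro w f
      have := hz (Sum.inl (w, f))
      rw [hrow1] at this
      simp only [hd] at this
      linarith
    have hz1 : ∀ w, ∑ f, z (w, f) ≤ 1 := by
      intro w
      have := hz (Sum.inr (Sum.inl w))
      rw [hrow2] at this
      simpa [hd] using this
    have hzq : ∀ f, ∀ D ∈ ℋ f, (lo f D : ℝ) ≤ ∑ w ∈ D, z (w, f) ∧
        ∑ w ∈ D, z (w, f) ≤ (hi f D : ℝ) := by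
      intro f D hD

      have ht := hz (Sum.inr (Sum.inr (f, D, true)))
      have hf := hz (Sum.inr (Sum.inr (f, D, false)))
      rw [hrow3 f D true _ hD] at ht
      rw [hrow3 f D false _ hD] at hf
      simp [hd, hD] at ht hf
      constructor
      · have h2 : -(∑ w ∈ D, z (w, f)) ≤ -(lo f D : ℝ) := by linarith [hf]
        linarith
      · simpa using ht
    have hfz : LPLBFeasible ℋ lo hi (fun w f => z (w, f)) :=
      ⟨fun w f => hz0 w f, hz1, hzq⟩
    have := hopt _ hfz
    simp only [LPobj] at this
    calc ∑ i, av i * z i = ∑ w, ∑ f, av (w, f) * z (w, f) := by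
          rw [Fintype.sum_prod_type]
        _ ≤ ∑ w, ∑ f, av (w, f) * xv (w, f) := by
          simpa [hav, hxv] using this
        _ = ∑ i, av i * xv i := by rw [Fintype.sum_prod_type]
  obtain ⟨y, hy0, htight, hdualeq⟩ := lp_duality_at_opt A d av xv hxfeas hxopt
  set u : W → ℝ := fun w => y (Sum.inr (Sum.inl w)) with hu
  set pp : F → Finset W → ℝ := fun f D => y (Sum.inr (Sum.inr (f, D, true))) with hpp
  set pm : F → Finset W → ℝ := fun f D => y (Sum.inr (Sum.inr (f, D, false))) with hpm
  set ynn : W → F → ℝ := fun w f => y (Sum.inl (w, f)) with hynn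
  -- complementary slackness
  have hsynn : ∀ w f, ynn w f ≠ 0 → x w f = 0 := by
    intro w f h
    have := htight (Sum.inl (w, f)) h
    rw [hrow1] at this
    simp only [hd, hxv] at this
    linarith
  have hsu : ∀ w, u w ≠ 0 → ∑ f, x w f = 1 := by
    intro w h
    have := htight (Sum.inr (Sum.inl w)) h
    rw [hrow2] at this
    simpa [hd, hxv] using this
  have hspp : ∀ f D, D ∈ ℋ f → pp f D ≠ 0 → ∑ w ∈ D, x w f = (hi f D : ℝ) := by
    intro f D hD h
    have := htight (Sum.inr (Sum.inr (f, D, true))) h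
    rw [hrow3 f D true _ hD] at this
    simpa [hd, hD, hxv] using this
  have hspm : ∀ f D, D ∈ ℋ f → pm f D ≠ 0 → ∑ w ∈ D, x w f = (lo f D : ℝ) := by
    intro f D hD h
    have := htight (Sum.inr (Sum.inr (f, D, false))) h
    rw [hrow3 f D false _ hD] at this
    simp [hd, hD, hxv] at this
    linarith
  -- the dual equation, coordinatewise
  have hdual : ∀ (w : W) (f : F), a w f + c w f
      = u w - ynn w f + ∑ D ∈ Finset.univ.filter (fun D => D ∈ ℋ f ∧ w ∈ D),
          (pp f D - pm f D) := by
    intro w f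
    have h0 := hdualeq (w, f)
    rw [Fintype.sum_sum_type, Fintype.sum_sum_type] at h0
    have e1 : ∑ p : W × F, y (Sum.inl p) * A (Sum.inl p) (w, f) = - ynn w f := by
      have h1 : ∀ p : W × F, y (Sum.inl p) * A (Sum.inl p) (w, f)
          = if (w, f) = p then -y (Sum.inl p) else 0 := by
        intro p
        simp only [hA]
        by_cases h : (w, f) = p <;> simp [h]
      simp_rw [h1]
      rw [Finset.sum_ite_eq Finset.univ ((w, f) : W × F) (fun p => -y (Sum.inl p))]
      simp [hynn]
    have e2 : ∑ w' : W, y (Sum.inr (Sum.inl w')) * A (Sum.inr (Sum.inl w')) (w, f)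
        = u w := by
      have h1 : ∀ w', y (Sum.inr (Sum.inl w')) * A (Sum.inr (Sum.inl w')) (w, f)
          = if w = w' then y (Sum.inr (Sum.inl w')) else 0 := by
        intro w'
        simp only [hA]
        by_cases h : w = w' <;> simp [h]
      simp_rw [h1]
      rw [Finset.sum_ite_eq Finset.univ w (fun w' => y (Sum.inr (Sum.inl w')))]
      simp [hu]
    have e3 : ∑ q : F × Finset W × Bool,
        y (Sum.inr (Sum.inr q)) * A (Sum.inr (Sum.inr q)) (w, f)
        = ∑ D ∈ Finset.univ.filter (fun D => D ∈ ℋ f ∧ w ∈ D), (pp f D - pm f D) := by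
      have hsplit : (∑ q : F × Finset W × Bool,
          y (Sum.inr (Sum.inr q)) * A (Sum.inr (Sum.inr q)) (w, f))
          = ∑ f' : F, ∑ D : Finset W, ∑ tb : Bool,
              y (Sum.inr (Sum.inr (f', D, tb))) * A (Sum.inr (Sum.inr (f', D, tb))) (w, f) := by
        rw [Fintype.sum_prod_type]
        exact Finset.sum_congr rfl fun f' _ => Fintype.sum_prod_type _
      rw [hsplit]
      have h1 : ∀ (f' : F) (D : Finset W) (tb : Bool),
          y (Sum.inr (Sum.inr (f', D, tb))) * A (Sum.inr (Sum.inr (f', D, tb))) (w, f)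
          = if f' = f then
              (if D ∈ ℋ f' ∧ w ∈ D then (if tb then pp f' D else -pm f' D) else 0)
            else 0 := by
        intro f' D tb
        simp only [hA]
        by_cases h1 : f' = f
        · subst h1
          by_cases h2 : D ∈ ℋ f' <;> by_cases h3 : w ∈ D <;> cases tb <;>
            simp [h2, h3, hpp, hpm] <;> try ring
        · have h1' : ¬ (f = f') := fun h => h1 h.symm
          simp [h1, h1']
      simp_rw [h1]
      have h2 : ∀ (f' : F) (D : Finset W), (∑ tb : Bool, if f' = f then
          (if D ∈ ℋ f' ∧ w ∈ D then (if tb then pp f' D else -pm f' D) else 0) else 0)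
          = if f' = f then (if D ∈ ℋ f' ∧ w ∈ D then pp f' D - pm f' D else 0) else 0 := by
        intro f' D
        rw [Fintype.sum_bool]
        by_cases hc1 : f' = f <;> by_cases hc2 : D ∈ ℋ f' ∧ w ∈ D <;>
          simp [hc1, hc2] <;> split_ifs <;> ring
      simp_rw [h2]
      have h3 : ∀ f' : F, (∑ D : Finset W,
          if f' = f then (if D ∈ ℋ f' ∧ w ∈ D then pp f' D - pm f' D else 0) else 0)
          = if f' = f then
              (∑ D : Finset W, if D ∈ ℋ f' ∧ w ∈ D then pp f' D - pm f' D else 0)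
            else 0 := by
        intro f'
        split_ifs <;> simp
      simp_rw [h3]
      rw [Finset.sum_ite_eq' Finset.univ f (fun f' =>
        ∑ D : Finset W, if D ∈ ℋ f' ∧ w ∈ D then pp f' D - pm f' D else 0)]
      simp only [Finset.mem_univ, if_true]
      rw [Finset.sum_filter]
    rw [e1, e2, e3] at h0
    have hav' : av (w, f) = a w f + c w f := rfl
    rw [hav'] at h0
    rw [h0]
    ring
  -- construct the assignment
  have huniq : ∀ (w : W) (f f' : F), x w f = 1 → x w f' = 1 → f = f' := by
    intro w f f' h h'
    by_contra hne
    have hpair : ∑ g ∈ ({f, f'} : Finset F), x w g = 2 := by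
      rw [Finset.sum_pair hne, h, h']; norm_num
    have hle2 : (2:ℝ) ≤ ∑ g, x w g := by
      rw [← hpair]
      exact Finset.sum_le_sum_of_subset_of_nonneg (Finset.subset_univ _)
        (fun g _ _ => hx0 w g)
    linarith [hx1 w]
  have hexists1 : ∀ w, (∑ f, x w f = 1) → ∃ f, x w f = 1 := by
    intro w hs
    by_contra h
    push_neg at h
    have hz : ∀ f, x w f = 0 := fun f => (h01 w f).resolve_right (h f)
    rw [Finset.sum_congr rfl (fun f _ => hz f)] at hs
    simp at hs
  set X : W → Option F := fun w => if h : ∃ f, x w f = 1 then some h.choose else none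
    with hX
  have hXiff : ∀ w f, X w = some f ↔ x w f = 1 := by
    intro w f
    constructor
    · intro h
      rw [hX] at h
      dsimp only at h
      by_cases hh : ∃ f, x w f = 1
      · rw [dif_pos hh, Option.some_inj] at h
        rw [← h]; exact hh.choose_spec
      · rw [dif_neg hh] at h
        exact absurd h (by simp)
    · intro h
      have hh : ∃ f, x w f = 1 := ⟨f, h⟩
      rw [hX]
      dsimp only
      rw [dif_pos hh]
      exact congrArg some (huniq w _ _ hh.choose_spec h)
  have hassigned : ∀ f, assigned X f = Finset.univ.filter (fun w => x w f = 1) := by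
    intro f
    ext w
    simp [assigned, hXiff w f]
  have hsum_card : ∀ (f : F) (D' : Finset W),
      ∑ w ∈ D', x w f = ((assigned X f ∩ D').card : ℝ) := by
    intro f D'
    have h1 : ∀ w ∈ D', x w f = if x w f = 1 then (1:ℝ) else 0 := by
      intro w _
      rcases h01 w f with h | h <;> simp [h]
    have h2 : assigned X f ∩ D' = D'.filter (fun w => x w f = 1) := by
      ext w
      simp only [hassigned, Finset.mem_filter, Finset.mem_inter, Finset.mem_univ,
        true_and, and_comm]
    rw [Finset.sum_congr rfl h1, Finset.sum_boole, h2]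
  -- salaries
  set sal : W → F → ℝ := fun w f => u w - a w f with hsal
  have hunone : ∀ w, X w = none → u w = 0 := by
    intro w h
    by_contra hne
    obtain ⟨f, hf⟩ := hexists1 w (hsu w hne)
    rw [hX] at h
    dsimp only at h
    rw [dif_pos ⟨f, hf⟩] at h
    simp at h
  have hwp : ∀ w, workerPayoff a sal X w = u w := by
    intro w
    rcases hcase : X w with _ | f
    · simp only [workerPayoff, hcase]
      exact (hunone w hcase).symm
    · simp only [workerPayoff, hcase, hsal]
      ring
  -- firm payoffs
  set Hf : F → Finset (Finset W) := fun f => Finset.univ.filter (fun D => D ∈ ℋ f)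
    with hHf
  set vF : F → ℝ := fun f =>
    ∑ D ∈ Hf f, ((hi f D : ℝ) * pp f D - (lo f D : ℝ) * pm f D) with hvF
  have hcardpp : ∀ f D, D ∈ ℋ f →
      ((assigned X f ∩ D).card : ℝ) * pp f D = (hi f D : ℝ) * pp f D := by
    intro f D hD
    rcases eq_or_ne (pp f D) 0 with h | h
    · rw [h]; ring
    · have hs := hspp f D hD h
      rw [hsum_card f D] at hs
      rw [hs]
  have hcardpm : ∀ f D, D ∈ ℋ f →
      ((assigned X f ∩ D).card : ℝ) * pm f D = (lo f D : ℝ) * pm f D := by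
    intro f D hD
    rcases eq_or_ne (pm f D) 0 with h | h
    · rw [h]; ring
    · have hs := hspm f D hD h
      rw [hsum_card f D] at hs
      rw [hs]
  have hfilter_eq : ∀ (f : F) (w : W),
      Finset.univ.filter (fun D => D ∈ ℋ f ∧ w ∈ D)
        = (Hf f).filter (fun D => w ∈ D) := by
    intro f w
    rw [hHf]
    rw [Finset.filter_filter]
  have hfp : ∀ f, firmPayoff (fun D' f' => ∑ w ∈ D', c w f') sal X f = vF f := by
    intro f
    rw [firmPayoff]
    have h1 : (∑ w ∈ assigned X f, c w f) - ∑ w ∈ assigned X f, sal w f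
        = ∑ w ∈ assigned X f, (a w f + c w f - u w) := by
      rw [← Finset.sum_sub_distrib]
      exact Finset.sum_congr rfl fun w _ => by simp only [hsal]; ring
    rw [h1]
    have h2 : ∀ w ∈ assigned X f, a w f + c w f - u w
        = ∑ D ∈ Hf f, (if w ∈ D then pp f D - pm f D else 0) := by
      intro w hw
      have hx1' : x w f = 1 := by
        rw [hassigned] at hw
        simpa using hw
      have hynn0 : ynn w f = 0 := by
        by_contra hne
        have := hsynn w f hne
        rw [this] at hx1'
        norm_num at hx1'
      have hd := hdual w f
      rw [hfilter_eq f w, Finset.sum_filter] at hd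
      rw [hynn0] at hd
      linarith [hd]
    rw [Finset.sum_congr rfl h2, Finset.sum_comm]
    rw [hvF]
    refine Finset.sum_congr rfl fun D hD => ?_
    have hDH : D ∈ ℋ f := by
      rw [hHf] at hD
      simpa using hD
    rw [Finset.sum_ite_mem, Finset.sum_const, nsmul_eq_mul, mul_sub,
      hcardpp f D hDH, hcardpm f D hDH]
  -- the key inequality
  have hmain : ∀ (f : F), ∀ D ∈ quotaSets (ℋ f) (lo f) (hi f),
      ∑ w ∈ D, (a w f + c w f) ≤ (∑ w ∈ D, u w) + vF f := by
    intro f D hD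
    have h1 : ∀ w ∈ D, a w f + c w f
        = u w - ynn w f + ∑ D' ∈ Hf f, (if w ∈ D' then pp f D' - pm f D' else 0) := by
      intro w _
      have hd := hdual w f
      rw [hfilter_eq f w, Finset.sum_filter] at hd
      exact hd
    rw [Finset.sum_congr rfl h1]
    have h2 : ∑ w ∈ D, (u w - ynn w f
          + ∑ D' ∈ Hf f, (if w ∈ D' then pp f D' - pm f D' else 0))
        = (∑ w ∈ D, u w) - (∑ w ∈ D, ynn w f)
          + ∑ w ∈ D, ∑ D' ∈ Hf f, (if w ∈ D' then pp f D' - pm f D' else 0) := by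
      rw [Finset.sum_add_distrib, Finset.sum_sub_distrib]
    rw [h2]
    have h3 : 0 ≤ ∑ w ∈ D, ynn w f :=
      Finset.sum_nonneg fun w _ => hy0 (Sum.inl (w, f))
    have h4 : ∑ w ∈ D, ∑ D' ∈ Hf f, (if w ∈ D' then pp f D' - pm f D' else 0)
        = ∑ D' ∈ Hf f, ((D ∩ D').card : ℝ) * (pp f D' - pm f D') := by
      rw [Finset.sum_comm]
      refine Finset.sum_congr rfl fun D' _ => ?_
      rw [Finset.sum_ite_mem, Finset.sum_const, nsmul_eq_mul]
    rw [h4]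
    have h5 : ∑ D' ∈ Hf f, ((D ∩ D').card : ℝ) * (pp f D' - pm f D') ≤ vF f := by
      rw [hvF]
      refine Finset.sum_le_sum fun D' hD' => ?_
      have hDH : D' ∈ ℋ f := by
        rw [hHf] at hD'
        simpa using hD'
      obtain ⟨hql, hqh⟩ := hD D' hDH
      have hcl : (lo f D' : ℝ) ≤ ((D ∩ D').card : ℝ) := by exact_mod_cast hql
      have hch : ((D ∩ D').card : ℝ) ≤ (hi f D' : ℝ) := by exact_mod_cast hqh
      have hp0 : 0 ≤ pp f D' := hy0 (Sum.inr (Sum.inr (f, D', true)))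
      have hm0 : 0 ≤ pm f D' := hy0 (Sum.inr (Sum.inr (f, D', false)))
      have t1 : ((D ∩ D').card : ℝ) * pp f D' ≤ (hi f D' : ℝ) * pp f D' :=
        mul_le_mul_of_nonneg_right hch hp0
      have t2 : (lo f D' : ℝ) * pm f D' ≤ ((D ∩ D').card : ℝ) * pm f D' :=
        mul_le_mul_of_nonneg_right hcl hm0
      nlinarith [t1, t2]
    linarith [h3, h5]
  -- r-feasibility
  have hRF : RFeasible (fun f => quotaSets (ℋ f) (lo f) (hi f)) X := by
    intro f
    intro D' hD'
    obtain ⟨hql, hqh⟩ := hxq f D' hD'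
    rw [hsum_card f D'] at hql hqh
    constructor
    · exact_mod_cast hql
    · exact_mod_cast hqh
  -- individual rationality
  have hIR : ∀ w, 0 ≤ workerPayoff a sal X w := by
    intro w
    rw [hwp w]
    exact hy0 _
  -- the inequality in the required form
  have hineq : ∀ (f : F), ∀ D ∈ quotaSets (ℋ f) (lo f) (hi f),
      ∑ w ∈ D, (a w f + c w f) ≤
        (∑ w ∈ D, workerPayoff a sal X w) +
          firmPayoff (fun D' f' => ∑ w ∈ D', c w f') sal X f := by
    intro f D hD
    rw [hfp f, Finset.sum_congr rfl (fun w _ => hwp w)]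
    exact hmain f D hD
  -- no blocking
  have hnb : ¬ Blocks a (fun D f => ∑ w ∈ D, c w f)
      (fun f => quotaSets (ℋ f) (lo f) (hi f)) sal X := by
    rintro ⟨f, D, hD, r, hwge, hfge, hstrict⟩
    have hmainD := hineq f D hD
    have hsplit : ∑ w ∈ D, (a w f + c w f)
        = (∑ w ∈ D, (a w f + r w)) + ((∑ w ∈ D, c w f) - ∑ w ∈ D, r w) := by
      rw [← Finset.sum_sub_distrib, ← Finset.sum_add_distrib]
      exact Finset.sum_congr rfl fun w _ => by ring
    rcases hstrict with ⟨w0, hw0, hlt⟩ | hlt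
    · have hA' : ∑ w ∈ D, workerPayoff a sal X w < ∑ w ∈ D, (a w f + r w) :=
        Finset.sum_lt_sum (fun w hw => hwge w hw) ⟨w0, hw0, hlt⟩
      linarith [hfge, hmainD, hsplit, hA']
    · have hA' : ∑ w ∈ D, workerPayoff a sal X w ≤ ∑ w ∈ D, (a w f + r w) :=
        Finset.sum_le_sum (fun w hw => hwge w hw)
      linarith [hmainD, hsplit, hA', hlt]
  exact ⟨X, sal, hXiff, hRF, hIR, hineq, hRF, hIR, hnb⟩



end TwoSidedMatching
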